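/- Let K be a positive integer and let X₁,…,X_K, Y₁,…,Y_K be 2K mutually independent real random variables on a probability space, each with the standard Gaussian distribution N(0,1). Let a : Fin K → ℝ be nonnegative. Then P( ∑ i, a i · (X i ² + Y i ²) ≤ 2K ) ≤ exp( K − ∑ i, ln(1 + a i) ). -/

import Mathlib

open MeasureTheory ProbabilityTheory
set_option maxHeartbeats 1000000

lemma iIndepFun_congr_ae {Ω ι : Type*} [MeasurableSpace Ω] {μ : Measure Ω}
    {β : ι → Type*} {m : ∀ i, MeasurableSpace (β i)} {f g : ∀ i, Ω → β i}
    (h : iIndepFun f μ) (h' : ∀ i, f i =ᵐ[μ] g i) : iIndepFun g μ := by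
  rw [iIndepFun_iff_measure_inter_preimage_eq_mul] at h ⊢
  intro S sets hsets
  have key : ∀ᵐ ω ∂μ, ∀ i ∈ S, f i ω = g i ω :=
    (ae_ball_iff S.countable_toSet).2 fun i _ => h' i
  have h1 : ∀ i ∈ S, μ (g i ⁻¹' sets i) = μ (f i ⁻¹' sets i) := by
    intro i hi
    refine measure_congr ?_
    filter_upwards [h' i] with ω hω
    show (g i ω ∈ sets i) = (f i ω ∈ sets i)
    rw [hω]
  have h2 : μ (⋂ i ∈ S, g i ⁻¹' sets i) = μ (⋂ i ∈ S, f i ⁻¹' sets i) := by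
    refine measure_congr ?_
    filter_upwards [key] with ω hω
    show (ω ∈ ⋂ i ∈ S, g i ⁻¹' sets i) = (ω ∈ ⋂ i ∈ S, f i ⁻¹' sets i)
    simp only [Set.mem_iInter, Set.mem_preimage]
    exact eq_iff_iff.mpr ⟨fun H i hi => by rw [hω i hi]; exact H i hi,
      fun H i hi => by rw [← hω i hi]; exact H i hi⟩
  rw [h2, h S hsets]
  exact (Finset.prod_congr rfl h1).symm

lemma integral_exp_neg_mul_sq_gaussianReal {c : ℝ} (hc : 0 ≤ c) :
    (∫ x, Real.exp (-(c * x ^ 2)) ∂(gaussianReal 0 1)) = (Real.sqrt (1 + 2 * c))⁻¹ := by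
  rw [gaussianReal_of_var_ne_zero 0 one_ne_zero]
  have hpdf : (gaussianPDF 0 1)
      = fun x => ((Real.toNNReal (gaussianPDFReal 0 1 x) : NNReal) : ENNReal) := by
    ext x; simp [gaussianPDF, ENNReal.ofReal]
  rw [hpdf, integral_withDensity_eq_integral_smul
    ((measurable_gaussianPDFReal 0 1).real_toNNReal) _]
  have hptw : ∀ x : ℝ, (Real.toNNReal (gaussianPDFReal 0 1 x)) • Real.exp (-(c * x ^ 2))
      = (Real.sqrt (2 * Real.pi))⁻¹ * Real.exp (-(c + 1/2) * x ^ 2) := by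
    intro x
    rw [NNReal.smul_def, smul_eq_mul, Real.coe_toNNReal _ (gaussianPDFReal_nonneg 0 1 x)]
    unfold gaussianPDFReal
    push_cast
    rw [mul_one, mul_assoc]
    congr 1
    rw [← Real.exp_add]
    congr 1
    ring
  simp_rw [hptw]
  rw [MeasureTheory.integral_const_mul, integral_gaussian]
  rw [← Real.sqrt_inv, ← Real.sqrt_mul (by positivity), ← Real.sqrt_inv]
  congr 1
  have hπ := Real.pi_pos
  have h2 : c + 1/2 ≠ 0 := by positivity
  field_simp
  ring

/-- Chernoff-bound computation: if `X i, Y i` (for `i : Fin K`) are `2K` mutually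
independent standard Gaussian real random variables and `a i ≥ 0`, then
`P(∑ i, a i * (X i ^ 2 + Y i ^ 2) ≤ 2K) ≤ exp(K - ∑ i, ln (1 + a i))`. -/
theorem chernoff_weighted_chi_square {Ω : Type*} [MeasurableSpace Ω]
    (P : Measure Ω) [IsProbabilityMeasure P]
    (K : ℕ) (hK : 0 < K) (X Y : Fin K → Ω → ℝ)
    (hindep : iIndepFun (Sum.elim X Y) P)
    (hX : ∀ i, Measure.map (X i) P = gaussianReal 0 1)
    (hY : ∀ i, Measure.map (Y i) P = gaussianReal 0 1)
    (a : Fin K → ℝ) (ha : ∀ i, 0 ≤ a i) :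
    (P {ω | ∑ i, a i * ((X i ω) ^ 2 + (Y i ω) ^ 2) ≤ 2 * K}).toReal ≤
      Real.exp (K - ∑ i, Real.log (1 + a i)) := by
  have h1a : ∀ i, (0:ℝ) < 1 + a i := fun i => by have := ha i; linarith
  set Z : Fin K ⊕ Fin K → Ω → ℝ := Sum.elim X Y with hZdef
  have hZmap : ∀ j, Measure.map (Z j) P = gaussianReal 0 1 := by
    intro j; cases j with
    | inl i => exact hX i
    | inr i => exact hY i
  have hZae : ∀ j, AEMeasurable (Z j) P := fun j =>
    aemeasurable_of_map_neZero (by rw [hZmap j]; infer_instance)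
  set Z' : Fin K ⊕ Fin K → Ω → ℝ := fun j => (hZae j).mk (Z j) with hZ'def
  have hZ'meas : ∀ j, Measurable (Z' j) := fun j => (hZae j).measurable_mk
  have hZeq : ∀ j, Z j =ᵐ[P] Z' j := fun j => (hZae j).ae_eq_mk
  have hZ'map : ∀ j, Measure.map (Z' j) P = gaussianReal 0 1 := fun j => by
    rw [← Measure.map_congr (hZeq j), hZmap j]
  have hZ'indep : iIndepFun Z' P :=
    iIndepFun_congr_ae hindep hZeq
  set w : Fin K ⊕ Fin K → ℝ := Sum.elim a a with hwdef
  have hw : ∀ j, 0 ≤ w j := fun j => by cases j <;> exact ha _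
  set W : Fin K ⊕ Fin K → Ω → ℝ := fun j ω => w j * (Z' j ω) ^ 2 with hWdef
  have hWmeas : ∀ j, Measurable (W j) := fun j =>
    measurable_const.mul ((hZ'meas j).pow_const 2)
  have hWindep : iIndepFun W P :=
    hZ'indep.comp (fun j => fun x : ℝ => w j * x ^ 2)
      (fun j => measurable_const.mul (measurable_id.pow_const 2))
  -- mgf of each summand
  have hmgf : ∀ j, mgf (W j) P (-(1/2)) = (Real.sqrt (1 + w j))⁻¹ := by
    intro j
    have hg : AEStronglyMeasurable (fun x : ℝ => Real.exp (-(w j / 2 * x ^ 2)))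
        (Measure.map (Z' j) P) := by
      apply Measurable.aestronglyMeasurable; fun_prop
    have step : mgf (W j) P (-(1/2))
        = ∫ x, Real.exp (-(w j / 2 * x ^ 2)) ∂(Measure.map (Z' j) P) := by
      rw [integral_map (hZ'meas j).aemeasurable hg]
      unfold mgf
      refine integral_congr_ae (Filter.Eventually.of_forall fun ω => ?_)
      simp only [hWdef]
      congr 1; ring
    rw [step, hZ'map j, integral_exp_neg_mul_sq_gaussianReal (by have := hw j; linarith : (0:ℝ) ≤ w j / 2),
      show 1 + 2 * (w j / 2) = 1 + w j by ring]
  -- integrability for Chernoff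
  have hSmeas : Measurable fun ω => (∑ j, W j) ω := by
    simp only [Finset.sum_apply]
    exact Finset.measurable_sum _ fun j _ => hWmeas j
  have hS_nonneg : ∀ ω, 0 ≤ (∑ j, W j) ω := fun ω => by
    rw [Finset.sum_apply]
    exact Finset.sum_nonneg fun j _ => mul_nonneg (hw j) (sq_nonneg _)
  have hint : Integrable (fun ω => Real.exp (-(1/2) * (∑ j, W j) ω)) P := by
    refine Integrable.mono' (integrable_const 1)
      ((hSmeas.const_mul _).exp.aestronglyMeasurable) (ae_of_all _ fun ω => ?_)
    rw [Real.norm_eq_abs, abs_of_pos (Real.exp_pos _)]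
    refine Real.exp_le_one_iff.mpr ?_
    have := hS_nonneg ω
    nlinarith
  have hch := measure_le_le_exp_mul_mgf (μ := P) (X := ∑ j, W j) (t := -(1/2))
    (2 * K : ℝ) (by norm_num) hint
  have hmgfsum : mgf (∑ j, W j) P (-(1/2)) = ∏ j, mgf (W j) P (-(1/2)) :=
    hWindep.mgf_sum hWmeas Finset.univ
  -- the two events agree a.e.
  have hsets : P {ω | ∑ i, a i * ((X i ω) ^ 2 + (Y i ω) ^ 2) ≤ 2 * K}
      = P {ω | (∑ j, W j) ω ≤ 2 * K} := by
    refine measure_congr ?_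
    have key : ∀ᵐ ω ∂P, ∀ j, Z j ω = Z' j ω := ae_all_iff.2 hZeq
    filter_upwards [key] with ω hω
    show (∑ i, a i * ((X i ω) ^ 2 + (Y i ω) ^ 2) ≤ 2 * (K:ℝ))
      = ((∑ j, W j) ω ≤ 2 * (K:ℝ))
    congr 1
    rw [Finset.sum_apply, Fintype.sum_sum_type]
    simp only [hWdef, hwdef, Sum.elim_inl, Sum.elim_inr]
    rw [← Finset.sum_add_distrib]
    refine Finset.sum_congr rfl fun i _ => ?_
    rw [← hω (Sum.inl i), ← hω (Sum.inr i)]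
    show a i * ((X i ω) ^ 2 + (Y i ω) ^ 2)
      = a i * (Z (Sum.inl i) ω) ^ 2 + a i * (Z (Sum.inr i) ω) ^ 2
    simp only [hZdef, Sum.elim_inl, Sum.elim_inr]
    ring
  calc (P {ω | ∑ i, a i * ((X i ω) ^ 2 + (Y i ω) ^ 2) ≤ 2 * K}).toReal
      = (P {ω | (∑ j, W j) ω ≤ 2 * K}).toReal := by rw [hsets]
    _ ≤ Real.exp (-(-(1/2)) * (2 * K)) * mgf (∑ j, W j) P (-(1/2)) := hch
    _ = Real.exp K * ∏ i, (1 + a i)⁻¹ := by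
        rw [hmgfsum]
        simp_rw [hmgf]
        rw [Fintype.prod_sum_type]
        simp only [hwdef, Sum.elim_inl, Sum.elim_inr]
        rw [← Finset.prod_mul_distrib]
        congr 1
        · congr 1; ring
        · refine Finset.prod_congr rfl fun i _ => ?_
          rw [← mul_inv, Real.mul_self_sqrt (h1a i).le]
    _ = Real.exp ((K : ℝ) - ∑ i, Real.log (1 + a i)) := by
        rw [Real.exp_sub, Real.exp_sum,
          show (∏ i, Real.exp (Real.log (1 + a i))) = ∏ i, (1 + a i) from
            Finset.prod_congr rfl fun i _ => Real.exp_log (h1a i),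
          div_eq_mul_inv, ← Finset.prod_inv_distrib]
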